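/- Let 1 ≤ d ≤ q and suppose the value function decomposes as ν(C) = Σ_{j ∈ C∩{1,…,d}} Σ_{k ∈ C∩{1,…,d}} a_{j,k} + ν₂(C ∩ {d+1,…,q}) for all C ⊆ Q, where A = (a_{j,k}) ∈ ℝ^{q×q} vanishes outside its upper-left d×d block and ν₂ is a real-valued function on subsets of {d+1,…,q}. Then for every 1 ≤ j ≤ d the Shapley value of ν is φ_j = ½ · Σ_{k=1}^d (a_{j,k} + a_{k,j}). -/

import Mathlib

open Finset

/-- Shapley value of player `j` for value function `ν` on coalitions of `Fin q`. -/
noncomputable def shapley {q : ℕ} (ν : Finset (Fin q) → ℝ) (j : Fin q) : ℝ :=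
  ((q : ℝ))⁻¹ * ∑ C ∈ (Finset.univ.erase j).powerset,
    (((q - 1).choose C.card : ℝ))⁻¹ * (ν (insert j C) - ν C)

/-- if the value function is a bilinear form in the first `d`
components plus a general term in the remaining components, the Shapley values
of the first `d` players are given by the bilinear formula. -/
lemma sum_range_succ_real (n : ℕ) : ∑ m ∈ Finset.range n, ((m : ℝ) + 1) = n * (n + 1) / 2 := by
  induction n with
  | zero => simp
  | succ n ih => rw [Finset.sum_range_succ, ih]; push_cast; ring

lemma sum_inv_choose {α : Type*} [DecidableEq α] (S : Finset α) :
    ∑ C ∈ S.powerset, ((S.card.choose C.card : ℝ))⁻¹ = S.card + 1 := by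
  rw [Finset.sum_powerset_apply_card (fun m => ((S.card.choose m : ℝ))⁻¹)]
  have key : ∀ m ∈ Finset.range (S.card + 1),
      (S.card.choose m) • ((S.card.choose m : ℝ))⁻¹ = 1 := by
    intro m hm
    rw [Finset.mem_range, Nat.lt_succ_iff] at hm
    rw [nsmul_eq_mul, mul_inv_cancel₀]
    exact_mod_cast (Nat.choose_pos hm).ne'
  rw [Finset.sum_congr rfl key, Finset.sum_const, Finset.card_range]
  simp

lemma sum_inv_choose_mem {α : Type*} [DecidableEq α] (S : Finset α) (k : α) (hk : k ∈ S) :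
    ∑ C ∈ S.powerset.filter (fun C => k ∈ C), ((S.card.choose C.card : ℝ))⁻¹
      = (S.card + 1) / 2 := by
  have hn : 1 ≤ S.card := Finset.card_pos.2 ⟨k, hk⟩
  have hbij : ∑ C ∈ S.powerset.filter (fun C => k ∈ C), ((S.card.choose C.card : ℝ))⁻¹
      = ∑ D ∈ (S.erase k).powerset, ((S.card.choose (D.card + 1) : ℝ))⁻¹ := by
    refine Finset.sum_nbij' (fun C => C.erase k) (fun D => insert k D) ?_ ?_ ?_ ?_ ?_
    · intro C hC
      simp only [Finset.mem_filter, Finset.mem_powerset] at hC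
      exact Finset.mem_powerset.2 (Finset.erase_subset_erase k hC.1)
    · intro D hD
      simp only [Finset.mem_powerset] at hD
      refine Finset.mem_filter.2 ⟨Finset.mem_powerset.2 (Finset.insert_subset hk
        (hD.trans (Finset.erase_subset k S))), Finset.mem_insert_self k D⟩
    · intro C hC
      simp only [Finset.mem_filter] at hC
      exact Finset.insert_erase hC.2
    · intro D hD
      simp only [Finset.mem_powerset] at hD
      exact Finset.erase_insert (fun h => (Finset.mem_erase.1 (hD h)).1 rfl)
    · intro C hC
      simp only [Finset.mem_filter] at hC
      rw [Finset.card_erase_of_mem hC.2, Nat.sub_add_cancel (Finset.card_pos.2 ⟨k, hC.2⟩)]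
  rw [hbij, Finset.sum_powerset_apply_card (fun m => ((S.card.choose (m + 1) : ℝ))⁻¹)]
  have hcard : (S.erase k).card = S.card - 1 := Finset.card_erase_of_mem hk
  rw [hcard]
  have hS0 : (S.card : ℝ) ≠ 0 := by positivity
  have key : ∀ m ∈ Finset.range (S.card - 1 + 1),
      ((S.card - 1).choose m) • ((S.card.choose (m + 1) : ℝ))⁻¹ = ((m : ℝ) + 1) / S.card := by
    intro m hm
    rw [Finset.mem_range, Nat.lt_succ_iff] at hm
    have hid : S.card * (S.card - 1).choose m = S.card.choose (m + 1) * (m + 1) := by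
      have := Nat.add_one_mul_choose_eq (S.card - 1) m
      rwa [Nat.sub_add_cancel hn] at this
    have hpos : (0 : ℝ) < S.card.choose (m + 1) := by
      exact_mod_cast Nat.choose_pos (by omega)
    rw [nsmul_eq_mul, inv_eq_one_div, mul_one_div, div_eq_div_iff hpos.ne' hS0]
    exact_mod_cast ((Nat.mul_comm _ _).trans (hid.symm.trans (Nat.mul_comm _ _))).symm
  rw [Finset.sum_congr rfl key, ← Finset.sum_div, sum_range_succ_real,
    Nat.sub_add_cancel hn]
  field_simp

theorem shapley_bilinear_plus_general (q d : ℕ) (hd1 : 1 ≤ d) (hd2 : d ≤ q)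
    (A : Fin q → Fin q → ℝ)
    (hA : ∀ j k : Fin q, (d ≤ (j : ℕ) ∨ d ≤ (k : ℕ)) → A j k = 0)
    (ν ν₂ : Finset (Fin q) → ℝ)
    (hν : ∀ C : Finset (Fin q),
      ν C = (∑ j ∈ C.filter (fun i : Fin q => (i : ℕ) < d),
               ∑ k ∈ C.filter (fun i : Fin q => (i : ℕ) < d), A j k)
        + ν₂ (C.filter (fun i : Fin q => d ≤ (i : ℕ))))
    (j : Fin q) (hj : (j : ℕ) < d) :
    shapley ν j
      = (1 / 2 : ℝ) * ∑ k ∈ Finset.univ.filter (fun i : Fin q => (i : ℕ) < d),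
          (A j k + A k j) := by
  classical
  have hq : 1 ≤ q := hd1.trans hd2
  set S : Finset (Fin q) := Finset.univ.erase j with hS
  set T : Finset (Fin q) :=
    (Finset.univ.filter (fun i : Fin q => (i : ℕ) < d)).erase j with hT
  have hScard : S.card = q - 1 := by
    rw [hS, Finset.card_erase_of_mem (Finset.mem_univ j), Finset.card_univ, Fintype.card_fin]
  have hcast : ((q - 1 : ℕ) : ℝ) + 1 = q := by
    have : (q - 1 : ℕ) + 1 = q := Nat.sub_add_cancel hq
    exact_mod_cast congrArg (Nat.cast : ℕ → ℝ) this
  -- marginal contribution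
  have hmarg : ∀ C ∈ S.powerset, ν (insert j C) - ν C
      = A j j + ∑ k ∈ T, (if k ∈ C then A j k + A k j else 0) := by
    intro C hC
    rw [Finset.mem_powerset] at hC
    have hjC : j ∉ C := fun h => (Finset.mem_erase.1 (hC h)).1 rfl
    set D : Finset (Fin q) := C.filter (fun i : Fin q => (i : ℕ) < d) with hD
    have hjD : j ∉ D := fun h => hjC (Finset.mem_filter.1 h).1
    have h1 : (insert j C).filter (fun i : Fin q => (i : ℕ) < d) = insert j D := by
      rw [Finset.filter_insert, if_pos hj]
    have h2 : (insert j C).filter (fun i : Fin q => d ≤ (i : ℕ))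
        = C.filter (fun i : Fin q => d ≤ (i : ℕ)) := by
      rw [Finset.filter_insert, if_neg (by omega)]
    rw [hν, hν, h1, h2]
    have hTD : T ∩ C = D := by
      ext x
      simp only [hT, hD, Finset.mem_inter, Finset.mem_erase, Finset.mem_filter,
        Finset.mem_univ, true_and]
      constructor
      · rintro ⟨⟨-, hx⟩, hxC⟩; exact ⟨hxC, hx⟩
      · rintro ⟨hxC, hx⟩; exact ⟨⟨fun h => hjC (h ▸ hxC), hx⟩, hxC⟩
    rw [Finset.sum_ite_mem, hTD]
    rw [Finset.sum_insert hjD,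
      Finset.sum_congr rfl (fun a (_ : a ∈ D) => Finset.sum_insert hjD),
      Finset.sum_add_distrib, Finset.sum_insert hjD, Finset.sum_add_distrib]
    ring
  unfold shapley
  rw [Finset.sum_congr rfl (fun C hC => by rw [hmarg C hC, mul_add, Finset.mul_sum]),
    Finset.sum_add_distrib, Finset.sum_comm, ← Finset.sum_mul]
  have hfirst : ∑ C ∈ S.powerset, ((q - 1).choose C.card : ℝ)⁻¹ = q := by
    have := sum_inv_choose S
    rw [hScard] at this
    rw [this, hcast]
  have hsecond : ∀ k ∈ T, ∑ C ∈ S.powerset,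
      ((q - 1).choose C.card : ℝ)⁻¹ * (if k ∈ C then A j k + A k j else 0)
      = (q / 2 : ℝ) * (A j k + A k j) := by
    intro k hk
    have hkS : k ∈ S := by
      rw [hT, Finset.mem_erase] at hk
      exact Finset.mem_erase.2 ⟨hk.1, Finset.mem_univ k⟩
    calc ∑ C ∈ S.powerset,
          ((q - 1).choose C.card : ℝ)⁻¹ * (if k ∈ C then A j k + A k j else 0)
        = ∑ C ∈ S.powerset,
          (if k ∈ C then ((q - 1).choose C.card : ℝ)⁻¹ * (A j k + A k j) else 0) := by
          exact Finset.sum_congr rfl (fun C _ => by rw [mul_ite, mul_zero])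
      _ = ∑ C ∈ S.powerset.filter (fun C => k ∈ C),
          ((q - 1).choose C.card : ℝ)⁻¹ * (A j k + A k j) := (Finset.sum_filter _ _).symm
      _ = (∑ C ∈ S.powerset.filter (fun C => k ∈ C),
          ((q - 1).choose C.card : ℝ)⁻¹) * (A j k + A k j) := by rw [Finset.sum_mul]
      _ = (q / 2 : ℝ) * (A j k + A k j) := by
          have := sum_inv_choose_mem S k hkS
          rw [hScard] at this
          rw [this, hcast]
  rw [Finset.sum_congr rfl hsecond, hfirst]
  have hjmem : j ∈ Finset.univ.filter (fun i : Fin q => (i : ℕ) < d) :=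
    Finset.mem_filter.2 ⟨Finset.mem_univ j, hj⟩
  have hRHS : ∑ k ∈ Finset.univ.filter (fun i : Fin q => (i : ℕ) < d), (A j k + A k j)
      = (A j j + A j j) + ∑ k ∈ T, (A j k + A k j) :=
    (Finset.add_sum_erase _ (fun k => A j k + A k j) hjmem).symm
  rw [hRHS, ← Finset.mul_sum]
  have hq0 : (q : ℝ) ≠ 0 := by positivity
  field_simp
  ring
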